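/- In the conflict analysis loop based on the First-UIP scheme, each resolution step strictly decreases (with respect to a well-founded order) the multiset of positions in the assignment A of the literals of the current nogood δ that lie at the current decision level; hence conflict resolution terminates. -/

import Mathlib

inductive Lit (V : Type) where
  | pos : V → Lit V
  | neg : V → Lit V
deriving DecidableEq

def Lit.compl {V : Type} : Lit V → Lit V
  | .pos v => .neg v
  | .neg v => .pos v

def Lit.var {V : Type} : Lit V → V
  | .pos v => v
  | .neg v => v

variable {V : Type} [DecidableEq V]

/-- `σ` is the literal of `δ` occurring last in the assignment `A`. -/
def IsLast (A : List (Lit V)) (δ : Finset (Lit V)) (σ : Lit V) : Prop :=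
  σ ∈ δ ∧ σ ∈ A ∧ ∀ τ ∈ δ, A.idxOf τ ≤ A.idxOf σ

/-- `ε` is an antecedent of `σ`: `σ̄ ∈ ε` and every other literal of `ε`
occurs in `A` strictly before `σ`. -/
def Antecedent (A : List (Lit V)) (σ : Lit V) (ε : Finset (Lit V)) : Prop :=
  σ.compl ∈ ε ∧ ∀ τ ∈ ε, τ ≠ σ.compl → τ ∈ A ∧ A.idxOf τ < A.idxOf σ

/-- One conflict resolution step of the First-UIP scheme at decision level `d`:
the last literal `σ` of the current nogood `δ` is at level `d`, it is not the
unique literal of `δ` at that level, each literal of the chosen antecedent `ε`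
has level `≤ dl σ`, and `δ` is replaced by the resolvent. -/
def Step (A : List (Lit V)) (dl : Lit V → ℕ) (d : ℕ)
    (δ δ' : Finset (Lit V)) : Prop :=
  ∃ σ ε, IsLast A δ σ ∧ dl σ = d ∧ (∀ τ ∈ δ, τ ∈ A) ∧
    (∃ τ ∈ δ, τ ≠ σ ∧ dl τ = dl σ) ∧
    Antecedent A σ ε ∧ (∀ τ ∈ ε, τ ≠ σ.compl → dl τ ≤ dl σ) ∧
    δ' = δ.erase σ ∪ ε.erase σ.compl

/-- The multiset of positions in `A` of the literals of `δ` lying at decision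
level `d`. -/
def posns (A : List (Lit V)) (dl : Lit V → ℕ) (d : ℕ) (δ : Finset (Lit V)) :
    Multiset ℕ :=
  (δ.filter (fun τ => dl τ = d)).val.map (fun τ => A.idxOf τ)

/-- The Dershowitz–Manna order on multisets of naturals (well-founded). -/
def DMlt (M N : Multiset ℕ) : Prop :=
  ∃ X Y Z : Multiset ℕ, X ≠ 0 ∧ N = Z + X ∧ M = Z + Y ∧ ∀ y ∈ Y, ∃ x ∈ X, y < x


instance IsTrichotomousNatGt : IsTrichotomous ℕ (fun a b : ℕ => b < a) := ⟨fun a b => by omega⟩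

lemma DMlt_wf : WellFounded DMlt := by
  have hlex : WellFounded (Finsupp.Lex (fun a b : ℕ => b < a) ((· < ·) : ℕ → ℕ → Prop)) :=
    Finsupp.Lex.wellFounded' (fun n => Nat.not_lt_zero n) Nat.lt_wfRel.wf Nat.lt_wfRel.wf
  refine Subrelation.wf (r := InvImage _ Multiset.toFinsupp) ?_ (InvImage.wf _ hlex)
  rintro M N ⟨X, Y, Z, hX, hN, hM, hY⟩
  obtain ⟨x0, hx0X, hx0max⟩ : ∃ x0 ∈ X, ∀ x ∈ X, x ≤ x0 := by
    have hne : X.toFinset.Nonempty := by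
      obtain ⟨a, ha⟩ := Multiset.exists_mem_of_ne_zero hX
      exact ⟨a, Multiset.mem_toFinset.2 ha⟩
    refine ⟨X.toFinset.max' hne, Multiset.mem_toFinset.1 (X.toFinset.max'_mem hne),
      fun x hx => X.toFinset.le_max' x (Multiset.mem_toFinset.2 hx)⟩
  have hYlt : ∀ y ∈ Y, y < x0 := fun y hy => by
    obtain ⟨x, hx, hyx⟩ := hY y hy; exact lt_of_lt_of_le hyx (hx0max x hx)
  refine ⟨x0, ?_, ?_⟩
  · intro j hj
    simp only [Multiset.toFinsupp_apply, hN, hM, Multiset.count_add]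
    have h1 : Y.count j = 0 := Multiset.count_eq_zero.2 fun h => absurd (hYlt j h) (by omega)
    have h2 : X.count j = 0 := Multiset.count_eq_zero.2 fun h => absurd (hx0max j h) (by omega)
    omega
  · simp only [Multiset.toFinsupp_apply, hN, hM, Multiset.count_add]
    have h1 : Y.count x0 = 0 := Multiset.count_eq_zero.2 fun h => absurd (hYlt x0 h) (by omega)
    have h2 : 0 < X.count x0 := Multiset.count_pos.2 hx0X
    omega

lemma step_decreases {V : Type} [DecidableEq V] (A : List (Lit V)) (dl : Lit V → ℕ) (d : ℕ)
    (δ δ' : Finset (Lit V)) (h : Step A dl d δ δ') :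
    DMlt (posns A dl d δ') (posns A dl d δ) := by
  obtain ⟨σ, ε, ⟨hσδ, hσA, hlast⟩, hσd, hδA, huip, ⟨hcε, hante⟩, hεlevel, hδ'⟩ := h
  classical
  set p := A.idxOf σ with hp
  set S₀ := (δ.erase σ).filter (fun τ => dl τ = d) with hS₀
  set E := (ε.erase σ.compl).filter (fun τ => dl τ = d) with hE
  set Z := S₀.val.map (fun τ => A.idxOf τ) with hZ
  set Y := (E \ S₀).val.map (fun τ => A.idxOf τ) with hYdef
  refine ⟨{p}, Y, Z, by simp, ?_, ?_, ?_⟩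
  · -- posns δ = Z + {p}
    have h1 : δ.filter (fun τ => dl τ = d) = insert σ S₀ := by
      conv_lhs => rw [← Finset.insert_erase hσδ]
      rw [Finset.filter_insert, if_pos hσd]
    have h2 : σ ∉ S₀ := by simp [hS₀]
    rw [posns, h1, Finset.insert_val, Multiset.ndinsert_of_notMem h2, Multiset.map_cons]
    rw [← Multiset.singleton_add, add_comm]
  · -- posns δ' = Z + Y
    have h1 : δ'.filter (fun τ => dl τ = d) = S₀ ∪ E := by
      rw [hδ', Finset.filter_union]
    have h2 : S₀ ∪ E = S₀.disjUnion (E \ S₀) (Finset.disjoint_sdiff) := by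
      rw [Finset.disjUnion_eq_union, Finset.union_sdiff_self_eq_union]
    have h3 : (S₀.disjUnion (E \ S₀) Finset.disjoint_sdiff).val = S₀.val + (E \ S₀).val := rfl
    rw [posns, h1, h2, h3, Multiset.map_add]
  · -- every y ∈ Y is < p
    intro y hy
    refine ⟨p, Multiset.mem_singleton_self p, ?_⟩
    rw [hYdef] at hy
    obtain ⟨τ, hτ, rfl⟩ := Multiset.mem_map.1 hy
    have hτE : τ ∈ E := (Finset.mem_sdiff.1 hτ).1
    have hτε : τ ∈ ε.erase σ.compl := Finset.mem_filter.1 hτE |>.1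
    exact (hante τ (Finset.mem_of_mem_erase hτε) (Finset.ne_of_mem_erase hτε)).2

/-- in First-UIP conflict analysis over a consistent assignment
`A` (no variable assigned twice, decision levels nondecreasing along `A`),
every resolution step strictly decreases, in the well-founded Dershowitz–Manna
order, the multiset of positions of the current nogood's literals at the
current decision level `d`; hence conflict resolution terminates, i.e. the
step relation is well-founded. -/
theorem stmt7 (A : List (Lit V)) (dl : Lit V → ℕ) (d : ℕ)
    (hnd : (A.map Lit.var).Nodup)
    (hcons : ∀ l ∈ A, l.compl ∉ A)
    (hmono : A.Pairwise (fun a b => dl a ≤ dl b)) :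
    (∀ δ δ' : Finset (Lit V), Step A dl d δ δ' →
        DMlt (posns A dl d δ') (posns A dl d δ)) ∧
    WellFounded DMlt ∧
    WellFounded (fun δ' δ : Finset (Lit V) => Step A dl d δ δ') := by
  refine ⟨fun δ δ' h => step_decreases A dl d δ δ' h, DMlt_wf, ?_⟩
  exact Subrelation.wf (fun h => step_decreases A dl d _ _ h)
    (InvImage.wf (posns A dl d) DMlt_wf)
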